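/- Let α ∈ ℝ with 0 < α < 1 and λ ∈ ℝ. The Gauss equation in codimension 1 with curvature components R_{1212} = −1 − 3λ²(α−1)², R_{1313} = −α² + λ²(α−1)², R_{2323} = −α + λ²(α−1)², R_{1213} = −2λα(α−1), R_{1223} = R_{1323} = 0 (these are the curvature components of the solvable Lie algebra r_{3,α} with its Milnor-type orthonormal frame with parameter λ) has a solution if and only if √(√((1+α²)² + 12α²) − (1+α²)) / (√6·(1−α)) < |λ| < √α/(1−α). -/

import Mathlib

set_option maxHeartbeats 1000000

-- sqrt condition equivalence
private lemma sqrt_cond_iff (a l : ℝ) (ha : 0 < a) (ha' : a < 1) :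
    (Real.sqrt (Real.sqrt ((1 + a ^ 2) ^ 2 + 12 * a ^ 2) - (1 + a ^ 2)) /
          (Real.sqrt 6 * (1 - a)) < |l| ∧ |l| < Real.sqrt a / (1 - a)) ↔
    (l ^ 2 * (a - 1) ^ 2 < a ∧
      a ^ 2 < 3 * (l ^ 2 * (a - 1) ^ 2) ^ 2 + (1 + a ^ 2) * (l ^ 2 * (a - 1) ^ 2)) := by
  have h1a : (0:ℝ) < 1 - a := by linarith
  have h6 : (0:ℝ) < Real.sqrt 6 := Real.sqrt_pos.mpr (by norm_num)
  have hden : 0 < Real.sqrt 6 * (1 - a) := by positivity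
  have habs : 0 ≤ |l| := abs_nonneg l
  have hl2 : |l| ^ 2 = l ^ 2 := sq_abs l
  have hsq : (a - 1) ^ 2 = (1 - a) ^ 2 := by ring
  constructor
  · rintro ⟨h1, h2⟩
    constructor
    · -- right inequality
      have h2' : |l| * (1 - a) < Real.sqrt a := (lt_div_iff₀ h1a).mp h2
      have := Real.lt_sqrt (by positivity) |>.mp h2'
      nlinarith [this]
    · -- left inequality
      have h1' : Real.sqrt (Real.sqrt ((1 + a ^ 2) ^ 2 + 12 * a ^ 2) - (1 + a ^ 2)) <
          |l| * (Real.sqrt 6 * (1 - a)) := (div_lt_iff₀ hden).mp h1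
      have hrpos : 0 < |l| * (Real.sqrt 6 * (1 - a)) :=
        lt_of_le_of_lt (Real.sqrt_nonneg _) h1'
      have h1'' := (Real.sqrt_lt' hrpos).mp h1'
      have hs6 : Real.sqrt 6 ^ 2 = 6 := Real.sq_sqrt (by norm_num)
      have hexp : (|l| * (Real.sqrt 6 * (1 - a))) ^ 2 = 6 * (l ^ 2 * (1 - a) ^ 2) := by
        rw [mul_pow, mul_pow, hs6, hl2]; ring
      rw [hexp] at h1''
      -- sqrt W < 6t + c
      have hW : Real.sqrt ((1 + a ^ 2) ^ 2 + 12 * a ^ 2) <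
          6 * (l ^ 2 * (1 - a) ^ 2) + (1 + a ^ 2) := by linarith
      have hWpos : (0:ℝ) < 6 * (l ^ 2 * (1 - a) ^ 2) + (1 + a ^ 2) := by positivity
      have := (Real.sqrt_lt' hWpos).mp hW
      nlinarith [this]
  · rintro ⟨h1, h2⟩
    constructor
    · rw [div_lt_iff₀ hden]
      have hWpos : (0:ℝ) < 6 * (l ^ 2 * (1 - a) ^ 2) + (1 + a ^ 2) := by positivity
      have hW : Real.sqrt ((1 + a ^ 2) ^ 2 + 12 * a ^ 2) <
          6 * (l ^ 2 * (1 - a) ^ 2) + (1 + a ^ 2) := by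
        rw [show (6 * (l ^ 2 * (1 - a) ^ 2) + (1 + a ^ 2)) =
          Real.sqrt ((6 * (l ^ 2 * (1 - a) ^ 2) + (1 + a ^ 2)) ^ 2) from
          (Real.sqrt_sq hWpos.le).symm]
        apply Real.sqrt_lt_sqrt (by positivity)
        nlinarith
      have hlpos : 0 < |l| := by
        rcases eq_or_lt_of_le habs with h | h
        · exfalso
          have hl0 : l ^ 2 = 0 := by rw [← hl2, ← h]; norm_num
          rw [hl0] at h2; nlinarith
        · exact h
      have hrpos : 0 < |l| * (Real.sqrt 6 * (1 - a)) := by positivity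
      rw [show |l| * (Real.sqrt 6 * (1 - a)) =
        Real.sqrt ((|l| * (Real.sqrt 6 * (1 - a))) ^ 2) from (Real.sqrt_sq hrpos.le).symm]
      apply Real.sqrt_lt_sqrt
      · have : (1 + a ^ 2) ≤ Real.sqrt ((1 + a ^ 2) ^ 2 + 12 * a ^ 2) :=
          (Real.le_sqrt (by positivity) (by positivity)).mpr (by nlinarith)
        linarith
      · have hs6 : Real.sqrt 6 ^ 2 = 6 := Real.sq_sqrt (by norm_num)
        have hexp : (|l| * (Real.sqrt 6 * (1 - a))) ^ 2 = 6 * (l ^ 2 * (1 - a) ^ 2) := by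
          rw [mul_pow, mul_pow, hs6, hl2]; ring
        rw [hexp]; linarith
    · rw [lt_div_iff₀ h1a]
      rw [show Real.sqrt a = Real.sqrt a from rfl]
      have : |l| * (1 - a) < Real.sqrt a := by
        rw [show Real.sqrt a = Real.sqrt ((Real.sqrt a)^2) from (Real.sqrt_sq (Real.sqrt_nonneg a)).symm,
          Real.sq_sqrt ha.le]
        rw [show |l| * (1 - a) = Real.sqrt ((|l| * (1-a))^2) from (Real.sqrt_sq (by positivity)).symm]
        apply Real.sqrt_lt_sqrt (by positivity)
        rw [mul_pow, hl2]; nlinarith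
      exact this


private lemma gauss_exists_of_cond (a l : ℝ) (ha : 0 < a) (ha' : a < 1)
    (h1 : l ^ 2 * (a - 1) ^ 2 < a)
    (h2 : a ^ 2 < 3 * (l ^ 2 * (a - 1) ^ 2) ^ 2 + (1 + a ^ 2) * (l ^ 2 * (a - 1) ^ 2)) :
    ∃ h11 h12 h13 h22 h23 h33 : ℝ,
    h11 * h22 - h12 ^ 2 = (-1 - 3 * l ^ 2 * (a - 1) ^ 2) ∧
    h11 * h33 - h13 ^ 2 = (-a ^ 2 + l ^ 2 * (a - 1) ^ 2) ∧
    h22 * h33 - h23 ^ 2 = (-a + l ^ 2 * (a - 1) ^ 2) ∧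
    h11 * h23 - h13 * h12 = (-2 * l * a * (a - 1)) ∧
    h12 * h23 - h13 * h22 = 0 ∧
    h12 * h33 - h13 * h23 = 0 := by
  obtain ⟨t, ht⟩ : ∃ t : ℝ, t = l ^ 2 * (a - 1) ^ 2 := ⟨_, rfl⟩
  have hR : -1 - 3 * l ^ 2 * (a - 1) ^ 2 = -1 - 3 * t := by rw [ht]; ring
  rw [← ht] at h1 h2
  rw [hR, ← ht]
  have htnn : 0 ≤ t := ht ▸ by positivity
  obtain ⟨P, hP⟩ : ∃ P : ℝ, P = -1 - 3 * t := ⟨_, rfl⟩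
  obtain ⟨Q, hQ⟩ : ∃ Q : ℝ, Q = -a ^ 2 + t := ⟨_, rfl⟩
  obtain ⟨S, hS⟩ : ∃ S : ℝ, S = -a + t := ⟨_, rfl⟩
  obtain ⟨T, hT⟩ : ∃ T : ℝ, T = -2 * l * a * (a - 1) := ⟨_, rfl⟩
  rw [← hP, ← hQ, ← hS, ← hT]
  have hT2 : T ^ 2 = 4 * a ^ 2 * t := by rw [hT, ht]; ring
  have hq : Q * P - T ^ 2 < 0 := by rw [hQ, hP, hT2]; nlinarith
  have hSneg : S < 0 := by rw [hS]; linarith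
  have hdet : 0 < S * (Q * P - T ^ 2) := mul_pos_of_neg_of_neg hSneg hq
  obtain ⟨s, hs⟩ : ∃ s : ℝ, s = Real.sqrt (S * (Q * P - T ^ 2)) := ⟨_, rfl⟩
  have hspos : 0 < s := hs ▸ Real.sqrt_pos.mpr hdet
  have hs2 : s ^ 2 = S * (Q * P - T ^ 2) := hs ▸ Real.sq_sqrt hdet.le
  have hsne : s ≠ 0 := hspos.ne'
  refine ⟨(Q * P - T ^ 2) / s, 0, 0, S * P / s, S * T / s, S * Q / s, ?_, ?_, ?_, ?_, ?_, ?_⟩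
  · field_simp; linear_combination (-P) * hs2
  · field_simp; linear_combination (-Q) * hs2
  · field_simp; linear_combination (-S) * hs2
  · field_simp; linear_combination (-T) * hs2
  · ring
  · ring


private lemma cond_of_gauss_exists (a l h11 h12 h13 h22 h23 h33 : ℝ) (ha : 0 < a) (ha' : a < 1)
    (e1 : h11 * h22 - h12 ^ 2 = -1 - 3 * l ^ 2 * (a - 1) ^ 2)
    (e2 : h11 * h33 - h13 ^ 2 = -a ^ 2 + l ^ 2 * (a - 1) ^ 2)
    (e3 : h22 * h33 - h23 ^ 2 = -a + l ^ 2 * (a - 1) ^ 2)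
    (e4 : h11 * h23 - h13 * h12 = -2 * l * a * (a - 1))
    (e5 : h12 * h23 - h13 * h22 = 0)
    (e6 : h12 * h33 - h13 * h23 = 0) :
    l ^ 2 * (a - 1) ^ 2 < a ∧
      a ^ 2 < 3 * (l ^ 2 * (a - 1) ^ 2) ^ 2 + (1 + a ^ 2) * (l ^ 2 * (a - 1) ^ 2) := by
  obtain ⟨t, ht⟩ : ∃ t : ℝ, t = l ^ 2 * (a - 1) ^ 2 := ⟨_, rfl⟩
  have htnn : 0 ≤ t := ht ▸ by positivity
  rw [show (-1 - 3 * l ^ 2 * (a - 1) ^ 2 : ℝ) = -1 - 3 * t by rw [ht]; ring] at e1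
  rw [← ht] at e2 e3 ⊢
  obtain ⟨D, hD⟩ : ∃ D : ℝ, D = h11 * h22 * h33 + 2 * h12 * h13 * h23
      - h11 * h23 ^ 2 - h22 * h13 ^ 2 - h33 * h12 ^ 2 := ⟨_, rfl⟩
  have hT2 : (-2 * l * a * (a - 1)) ^ 2 = 4 * a ^ 2 * t := by rw [ht]; ring
  -- adj(adj h) = det h · h identities
  have hQP : (-a ^ 2 + t) * (-1 - 3 * t) - (-2 * l * a * (a - 1)) ^ 2 = D * h11 := by
    rw [← e1, ← e2, ← e4, hD]; ring
  have hSP : (-a + t) * (-1 - 3 * t) = D * h22 := by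
    rw [← e1, ← e3, hD]
    linear_combination (h12 * h23 - h13 * h22) * e5
  have hdetD : (-a + t) * ((-a ^ 2 + t) * (-1 - 3 * t) - (-2 * l * a * (a - 1)) ^ 2)
      = D ^ 2 := by
    rw [← e1, ← e2, ← e3, ← e4, hD]
    linear_combination ((h11 * h22 - h12 ^ 2) * (h12 * h33 - h13 * h23)
        - (h11 * h23 - h13 * h12) * (h12 * h23 - h13 * h22)) * e6
      + ((h11 * h33 - h13 ^ 2) * (h12 * h23 - h13 * h22)
        - (h11 * h23 - h13 * h12) * (h12 * h33 - h13 * h23)) * e5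
  have hDne : D ≠ 0 := by
    intro h0
    rw [h0] at hSP hQP
    -- S * P = 0 with P < 0 forces t = a; then QP = T^2 gives contradiction
    have hSP0 : (-a + t) * (-1 - 3 * t) = 0 := by linarith [hSP]
    have hS0 : -a + t = 0 := by
      rcases mul_eq_zero.mp hSP0 with h | h
      · exact h
      · nlinarith
    have hta : t = a := by linarith
    rw [hta] at hQP
    nlinarith [hT2, hta, sq_nonneg (-2 * l * a * (a - 1))]
  have hdetpos : 0 < (-a + t) * ((-a ^ 2 + t) * (-1 - 3 * t) - (-2 * l * a * (a - 1)) ^ 2) := by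
    rw [hdetD]; positivity
  rw [hT2] at hdetpos
  have h1 : t < a := by
    by_contra hc
    push_neg at hc
    have ha2 : a ^ 2 < a := by nlinarith
    have hq : (-a ^ 2 + t) * (-1 - 3 * t) - 4 * a ^ 2 * t ≤ 0 := by
      nlinarith [sq_nonneg t, mul_nonneg htnn (sq_nonneg a)]
    nlinarith [mul_nonneg (by linarith : (0:ℝ) ≤ -a + t)
      (by linarith : (0:ℝ) ≤ -((-a ^ 2 + t) * (-1 - 3 * t) - 4 * a ^ 2 * t))]
  have hqneg : (-a ^ 2 + t) * (-1 - 3 * t) - 4 * a ^ 2 * t < 0 := by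
    by_contra hc
    push_neg at hc
    nlinarith [mul_nonpos_of_nonpos_of_nonneg (by linarith : -a + t ≤ 0) hc]
  exact ⟨h1, by nlinarith [hqneg]⟩

/-- A solution of the Gauss equation in codimension 1 exists for the given curvature
components. (The family `h i j` is encoded by the six entries `h11, h12, h13, h22,
h23, h33`, symmetry `h i j = h j i` being automatic.) -/
def GaussSolvable (R1212 R1313 R2323 R1213 R1223 R1323 : ℝ) : Prop :=
  ∃ h11 h12 h13 h22 h23 h33 : ℝ,
    h11 * h22 - h12 ^ 2 = R1212 ∧
    h11 * h33 - h13 ^ 2 = R1313 ∧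
    h22 * h33 - h23 ^ 2 = R2323 ∧
    h11 * h23 - h13 * h12 = R1213 ∧
    h12 * h23 - h13 * h22 = R1223 ∧
    h12 * h33 - h13 * h23 = R1323

/-- Proposition 4.6 (3): for `0 < α < 1`, the metric Lie algebra
`(r_{3,α}, ⟨·,·⟩_λ)` has a solution of the Gauss equation in codimension 1 if and
only if `√(√((1+α²)² + 12α²) − (1+α²)) / (√6 (1−α)) < |λ| < √α/(1−α)`. -/
theorem r3_alpha_pos_gauss_solvable_iff (a l : ℝ) (ha : 0 < a) (ha' : a < 1) :
    GaussSolvable (-1 - 3 * l ^ 2 * (a - 1) ^ 2) (-a ^ 2 + l ^ 2 * (a - 1) ^ 2)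
        (-a + l ^ 2 * (a - 1) ^ 2) (-2 * l * a * (a - 1)) 0 0 ↔
      Real.sqrt (Real.sqrt ((1 + a ^ 2) ^ 2 + 12 * a ^ 2) - (1 + a ^ 2)) /
          (Real.sqrt 6 * (1 - a)) < |l| ∧
        |l| < Real.sqrt a / (1 - a) := by
  rw [show (Real.sqrt (Real.sqrt ((1 + a ^ 2) ^ 2 + 12 * a ^ 2) - (1 + a ^ 2)) /
          (Real.sqrt 6 * (1 - a)) < |l| ∧ |l| < Real.sqrt a / (1 - a)) ↔
      (l ^ 2 * (a - 1) ^ 2 < a ∧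
        a ^ 2 < 3 * (l ^ 2 * (a - 1) ^ 2) ^ 2 + (1 + a ^ 2) * (l ^ 2 * (a - 1) ^ 2))
    from sqrt_cond_iff a l ha ha']
  constructor
  · rintro ⟨h11, h12, h13, h22, h23, h33, e1, e2, e3, e4, e5, e6⟩
    exact cond_of_gauss_exists a l h11 h12 h13 h22 h23 h33 ha ha' e1 e2 e3 e4 e5 e6
  · rintro ⟨h1, h2⟩
    exact gauss_exists_of_cond a l ha ha' h1 h2
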